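/- Let p ≥ 1, B₁ < B₂ reals, B = [B₁,B₂]^p ⊆ ℝ^p, and let W : ℝ^p → ℝ be differentiable and σ-strongly concave on B with σ > 0. Let β* ∈ B be a maximizer of W over B, let β ∈ B and α > 0, and let P be the coordinatewise projection onto the box B. Then ‖P(β + α∇W(β)) − β*‖² ≤ (1 − 2σα)·‖β − β*‖² + α²·‖∇W(β)‖², where ‖·‖ is the Euclidean norm. -/

import Mathlib

/-- The box `[B₁, B₂]^p` in `ℝ^p`. -/
def box (p : ℕ) (B₁ B₂ : ℝ) : Set (EuclideanSpace ℝ (Fin p)) :=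
  {x | ∀ i, x i ∈ Set.Icc B₁ B₂}

/-- Coordinatewise projection onto the box `[B₁, B₂]^p`: `(P x) i = min B₂ (max B₁ (x i))`. -/
noncomputable def boxProj (p : ℕ) (B₁ B₂ : ℝ) (x : EuclideanSpace ℝ (Fin p)) :
    EuclideanSpace ℝ (Fin p) :=
  (WithLp.equiv 2 (Fin p → ℝ)).symm fun i => min B₂ (max B₁ (x i))

/-- `W` is `σ`-strongly concave on `S`. -/
def PaperStrongConcaveOn {p : ℕ} (S : Set (EuclideanSpace ℝ (Fin p))) (σ : ℝ)
    (W : EuclideanSpace ℝ (Fin p) → ℝ) : Prop :=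
  ∀ x ∈ S, ∀ y ∈ S, ∀ t ∈ Set.Icc (0 : ℝ) 1,
    t * W x + (1 - t) * W y + σ / 2 * t * (1 - t) * ‖x - y‖ ^ 2 ≤ W (t • x + (1 - t) • y)

open Filter Topology

local notation "⟪" x ", " y "⟫" => @inner ℝ _ _ x y

lemma clamp_sq_le (B₁ B₂ a b : ℝ) (hb : b ∈ Set.Icc B₁ B₂) :
    (min B₂ (max B₁ a) - b) ^ 2 ≤ (a - b) ^ 2 := by
  obtain ⟨h1, h2⟩ := hb
  rcases le_total a B₁ with h | h <;> rcases le_total a B₂ with h' | h' <;>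
    simp [min_def, max_def] <;> split_ifs <;> nlinarith

lemma box_convex {p : ℕ} {B₁ B₂ : ℝ} {x y : EuclideanSpace ℝ (Fin p)} {t : ℝ}
    (hx : x ∈ box p B₁ B₂) (hy : y ∈ box p B₁ B₂) (ht : t ∈ Set.Icc (0:ℝ) 1) :
    t • x + (1 - t) • y ∈ box p B₁ B₂ := by
  intro i
  have hx' := hx i
  have hy' := hy i
  simp only [PiLp.add_apply, PiLp.smul_apply, smul_eq_mul, Set.mem_Icc] at *
  obtain ⟨ht0, ht1⟩ := ht
  constructor <;> nlinarith [hx'.1, hx'.2, hy'.1, hy'.2]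

lemma gradIneq {p : ℕ} {σ : ℝ} {S : Set (EuclideanSpace ℝ (Fin p))}
    {W : EuclideanSpace ℝ (Fin p) → ℝ} (hdiff : Differentiable ℝ W)
    (hconc : PaperStrongConcaveOn S σ W)
    {x y : EuclideanSpace ℝ (Fin p)} (hx : x ∈ S) (hy : y ∈ S) :
    W y - W x + σ / 2 * ‖y - x‖ ^ 2 ≤ ⟪gradient W x, y - x⟫ := by
  set v := y - x with hv
  set g : ℝ → ℝ := fun t => W (x + t • v) with hg
  have hd : HasDerivAt g (⟪gradient W x, v⟫) 0 := by
    have h1 : HasDerivAt (fun t : ℝ => x + t • v) v 0 := by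
      simpa using ((hasDerivAt_id (0:ℝ)).smul_const v).const_add x
    have h2 : HasFDerivAt W ((InnerProductSpace.toDual ℝ _) (gradient W x)) (x + (0:ℝ) • v) := by
      simpa using (hdiff x).hasGradientAt.hasFDerivAt
    have h3 := h2.comp_hasDerivAt 0 h1
    simpa [Function.comp_def, InnerProductSpace.toDual_apply_apply, hg] using h3
  have hslope : Tendsto (slope g 0) (𝓝[>] 0) (𝓝 (⟪gradient W x, v⟫)) :=
    ((hasDerivAt_iff_tendsto_slope.mp hd).mono_left
      (nhdsWithin_mono 0 fun t ht => ne_of_gt ht))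
  have hrhs : Tendsto (fun t : ℝ => W y - W x + σ / 2 * (1 - t) * ‖y - x‖ ^ 2) (𝓝[>] 0)
      (𝓝 (W y - W x + σ / 2 * ‖y - x‖ ^ 2)) := by
    have hc : ContinuousAt (fun t : ℝ => W y - W x + σ / 2 * (1 - t) * ‖y - x‖ ^ 2) 0 := by
      fun_prop
    have h := hc.continuousWithinAt (s := Set.Ioi (0:ℝ))
    unfold ContinuousWithinAt at h
    simpa using h
  refine le_of_tendsto_of_tendsto hrhs hslope ?_
  filter_upwards [Ioo_mem_nhdsGT (one_pos : (0:ℝ) < 1)] with t ht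
  obtain ⟨ht0, ht1⟩ := ht
  have hc := hconc y hy x hx t ⟨le_of_lt ht0, le_of_lt ht1⟩
  have hcomb : t • y + (1 - t) • x = x + t • v := by
    simp only [hv, smul_sub]; module
  rw [hcomb] at hc
  have hg0 : g 0 = W x := by simp [hg]
  simp only [slope_def_field, sub_zero, hg0]
  rw [le_div_iff₀ ht0]
  nlinarith [hc]

lemma proj_nonexp {p : ℕ} {B₁ B₂ : ℝ} (x βstar : EuclideanSpace ℝ (Fin p))
    (hβstar : βstar ∈ box p B₁ B₂) :
    ‖boxProj p B₁ B₂ x - βstar‖ ^ 2 ≤ ‖x - βstar‖ ^ 2 := by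
  rw [EuclideanSpace.norm_eq, EuclideanSpace.norm_eq,
    Real.sq_sqrt (by positivity), Real.sq_sqrt (by positivity)]
  apply Finset.sum_le_sum
  intro i _
  simp only [PiLp.sub_apply, Real.norm_eq_abs, sq_abs, boxProj, WithLp.equiv_symm_apply, PiLp.toLp_apply]
  exact clamp_sq_le B₁ B₂ (x i) (βstar i) (hβstar i)

/-- **One-step contraction of projected gradient ascent under strong concavity.**
For `W` differentiable and `σ`-strongly concave on the box `[B₁,B₂]^p` with maximizer `β*`,
any `β` in the box and step size `α > 0` satisfy
`‖P(β + α ∇W(β)) - β*‖² ≤ (1 - 2σα) ‖β - β*‖² + α² ‖∇W(β)‖²`. -/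
theorem stmt3 (p : ℕ) (hp : 1 ≤ p) (B₁ B₂ : ℝ) (hB : B₁ < B₂)
    (σ α : ℝ) (hσ : 0 < σ) (hα : 0 < α)
    (W : EuclideanSpace ℝ (Fin p) → ℝ) (hdiff : Differentiable ℝ W)
    (hconc : PaperStrongConcaveOn (box p B₁ B₂) σ W)
    (βstar : EuclideanSpace ℝ (Fin p)) (hβstar : βstar ∈ box p B₁ B₂)
    (hmax : ∀ b ∈ box p B₁ B₂, W b ≤ W βstar)
    (β : EuclideanSpace ℝ (Fin p)) (hβ : β ∈ box p B₁ B₂) :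
    ‖boxProj p B₁ B₂ (β + α • gradient W β) - βstar‖ ^ 2
      ≤ (1 - 2 * σ * α) * ‖β - βstar‖ ^ 2 + α ^ 2 * ‖gradient W β‖ ^ 2 := by
  set g := gradient W β with hgdef
  -- Step 1: gap bound  σ/2 ‖β - β*‖² ≤ W β* - W β
  have hgap : σ / 2 * ‖β - βstar‖ ^ 2 ≤ W βstar - W β := by
    have htend : Tendsto (fun t : ℝ => σ / 2 * (1 - t) * ‖β - βstar‖ ^ 2) (𝓝[>] 0)
        (𝓝 (σ / 2 * ‖β - βstar‖ ^ 2)) := by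
      have hc : ContinuousAt (fun t : ℝ => σ / 2 * (1 - t) * ‖β - βstar‖ ^ 2) 0 := by
        fun_prop
      have h := hc.continuousWithinAt (s := Set.Ioi (0:ℝ))
      unfold ContinuousWithinAt at h
      simpa using h
    refine le_of_tendsto htend ?_
    filter_upwards [Ioo_mem_nhdsGT (one_pos : (0:ℝ) < 1)] with t ht
    obtain ⟨ht0, ht1⟩ := ht
    have hmem : t ∈ Set.Icc (0:ℝ) 1 := ⟨le_of_lt ht0, le_of_lt ht1⟩
    have hc := hconc β hβ βstar hβstar t hmem
    have hW := hmax _ (box_convex hβ hβstar hmem)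
    nlinarith [hc, hW]
  -- Step 2: gradient inequality at β
  have hgi := gradIneq hdiff hconc hβ hβstar
  have hip : σ * ‖β - βstar‖ ^ 2 ≤ ⟪g, βstar - β⟫ := by
    have hnorm : ‖βstar - β‖ = ‖β - βstar‖ := norm_sub_rev _ _
    rw [hnorm, ← hgdef] at hgi
    linarith
  -- Step 3: expand and combine
  have hre : β + α • g - βstar = (β - βstar) + α • g := by abel
  have hexp : ‖β + α • g - βstar‖ ^ 2
      = ‖β - βstar‖ ^ 2 + 2 * (α * ⟪β - βstar, g⟫) + α ^ 2 * ‖g‖ ^ 2 := by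
    rw [hre, norm_add_sq_real, real_inner_smul_right, norm_smul]
    rw [Real.norm_eq_abs, abs_of_pos hα]
    ring
  have hsym : ⟪β - βstar, g⟫ = - ⟪g, βstar - β⟫ := by
    rw [real_inner_comm, ← inner_neg_right]
    congr 1
    abel
  have hproj := proj_nonexp (β + α • g) βstar hβstar
  rw [hexp, hsym] at hproj
  nlinarith [hproj, hip]
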